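/- There exists a constant such that for all n ≥ 2 there is a graph on n vertices with no clique and no independent set of size greater than 2·log₂ n. -/

import Mathlib

open Finset

/-- counting functions constant on a set of coordinates -/
lemma count_const {V : Type*} [Fintype V] [DecidableEq V] (A : Finset (Sym2 V)) (b : Bool) :
    (Finset.univ.filter (fun f : Sym2 V → Bool => ∀ e ∈ A, f e = b)).card
      = 2 ^ (Fintype.card (Sym2 V) - A.card) := by
  rw [← Fintype.card_subtype]
  have e : {f : Sym2 V → Bool // ∀ e ∈ A, f e = b} ≃ ({e : Sym2 V // e ∉ A} → Bool) :=
    { toFun := fun f e => f.1 e.1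
      invFun := fun g => ⟨fun e => if h : e ∈ A then b else g ⟨e, h⟩, fun e he => by simp [he]⟩
      left_inv := fun f => Subtype.ext (funext fun e => by
        by_cases h : e ∈ A
        · simp [h, f.2 e h]
        · simp [h])
      right_inv := fun g => funext fun e => by simp [e.2] }
  rw [Fintype.card_congr e, Fintype.card_fun, Fintype.card_bool, Fintype.card_subtype_compl,
    Fintype.card_coe]

lemma pow_le_fact_sq : ∀ t : ℕ, 3 ≤ t → 2 ^ (t + 2) ≤ (Nat.factorial t) ^ 2 := by
  intro t ht
  induction t with
  | zero => omega
  | succ k ih =>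
    rcases Nat.lt_or_ge k 3 with hk | hk
    · interval_cases k <;> simp_all [Nat.factorial]
    · have h1 := ih (by omega)
      have h2 : 2 ^ (k + 1 + 2) = 2 * 2 ^ (k + 2) := by ring
      have h3 : (Nat.factorial (k+1))^2 = (k+1)^2 * (Nat.factorial k)^2 := by
        rw [Nat.factorial_succ]; ring
      have h4 : 2 ≤ (k+1)^2 := by nlinarith
      calc 2 ^ (k + 1 + 2) = 2 * 2 ^ (k+2) := h2
        _ ≤ (k+1)^2 * (Nat.factorial k)^2 := Nat.mul_le_mul h4 h1
        _ = (Nat.factorial (k+1))^2 := h3.symm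

lemma key_count (n t : ℕ) (ht : 3 ≤ t) (hn : n ^ 2 < 2 ^ t) :
    2 * n.choose t < 2 ^ (t.choose 2) := by
  have htfac : 0 < Nat.factorial t := Nat.factorial_pos t
  have h2 : 2 * (t.choose 2) = t * (t - 1) := by
    rw [Nat.choose_two_right]
    exact Nat.two_mul_div_two_of_even (Nat.even_mul_pred_self t)
  -- compare squares, multiplied by (t!)^2
  have hsq : (2 * n.choose t * Nat.factorial t) ^ 2
      < (2 ^ (t.choose 2) * Nat.factorial t) ^ 2 := by
    have hdesc : n.choose t * Nat.factorial t ≤ n ^ t := by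
      rw [mul_comm, ← Nat.descFactorial_eq_factorial_mul_choose]
      exact Nat.descFactorial_le_pow n t
    have hnp : (n ^ t) ^ 2 < (2 ^ t) ^ t := by
      calc (n ^ t) ^ 2 = (n ^ 2) ^ t := by ring
        _ < (2 ^ t) ^ t := Nat.pow_lt_pow_left hn (by omega)
    calc (2 * n.choose t * Nat.factorial t) ^ 2
        = 4 * (n.choose t * Nat.factorial t) ^ 2 := by ring
      _ ≤ 4 * (n ^ t) ^ 2 := by
          exact Nat.mul_le_mul_left 4 (Nat.pow_le_pow_left hdesc 2)
      _ < 4 * (2 ^ t) ^ t := mul_lt_mul_of_pos_left hnp (by norm_num)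
      _ = 2 ^ (t * t + 2) := by rw [← pow_mul]; ring
      _ = 2 ^ (t * (t - 1)) * 2 ^ (t + 2) := by
          rw [← pow_add]
          congr 1
          obtain ⟨k, rfl⟩ : ∃ k, t = k + 1 := ⟨t - 1, by omega⟩
          simp only [Nat.add_sub_cancel]
          ring
      _ ≤ 2 ^ (t * (t-1)) * (Nat.factorial t)^2 :=
          Nat.mul_le_mul_left _ (pow_le_fact_sq t ht)
      _ = (2 ^ (t.choose 2) * Nat.factorial t) ^ 2 := by
          rw [mul_pow, ← pow_mul, mul_comm (t.choose 2) 2, h2]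
  have hlt : 2 * n.choose t * Nat.factorial t < 2 ^ (t.choose 2) * Nat.factorial t := by
    by_contra hle
    push_neg at hle
    exact absurd (Nat.pow_le_pow_left hle 2) (not_le.mpr hsq)
  exact Nat.lt_of_mul_lt_mul_right hlt

/-- main counting step: a graph (as an edge-labelling) with no monochromatic `t`-set -/
lemma exists_good (n t : ℕ) (h : 2 * n.choose t < 2 ^ (t.choose 2)) (htn : t ≤ n) :
    ∃ f : Sym2 (Fin n) → Bool, ∀ s : Finset (Fin n), s.card = t →
      ¬((∀ e ∈ s.offDiag.image (Function.uncurry Sym2.mk), f e = true) ∨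
        (∀ e ∈ s.offDiag.image (Function.uncurry Sym2.mk), f e = false)) := by
  by_contra hc
  push_neg at hc
  set m := Fintype.card (Sym2 (Fin n)) with hm
  have hkm : t.choose 2 ≤ m := by
    have h1 : t.choose 2 ≤ n.choose 2 := Nat.choose_le_choose 2 htn
    have h2 : n.choose 2 ≤ m := by
      rw [hm, Sym2.card, Fintype.card_fin]
      exact Nat.choose_le_choose 2 (Nat.le_succ n)
    exact le_trans h1 h2
  set B := (Finset.univ.powersetCard t).biUnion (fun s : Finset (Fin n) =>
    (Finset.univ.filter (fun f : Sym2 (Fin n) → Bool => ∀ e ∈ s.offDiag.image (Function.uncurry Sym2.mk), f e = true)) ∪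
    (Finset.univ.filter (fun f : Sym2 (Fin n) → Bool => ∀ e ∈ s.offDiag.image (Function.uncurry Sym2.mk), f e = false)))
    with hB
  have hsub : (Finset.univ : Finset (Sym2 (Fin n) → Bool)) ⊆ B := by
    intro f _
    obtain ⟨s, hcard, hmono⟩ := hc f
    rw [hB, Finset.mem_biUnion]
    refine ⟨s, by simp [Finset.mem_powersetCard, hcard], ?_⟩
    rcases hmono with h1 | h1
    · exact Finset.mem_union_left _ (Finset.mem_filter.2 ⟨Finset.mem_univ _, h1⟩)
    · exact Finset.mem_union_right _ (Finset.mem_filter.2 ⟨Finset.mem_univ _, h1⟩)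
  have hcardB : B.card ≤ n.choose t * (2 * 2 ^ (m - t.choose 2)) := by
    rw [hB]
    refine (Finset.card_biUnion_le).trans ?_
    have hbound : ∀ s ∈ Finset.univ.powersetCard t,
        ((Finset.univ.filter (fun f : Sym2 (Fin n) → Bool => ∀ e ∈ s.offDiag.image (Function.uncurry Sym2.mk), f e = true)) ∪
        (Finset.univ.filter (fun f : Sym2 (Fin n) → Bool => ∀ e ∈ s.offDiag.image (Function.uncurry Sym2.mk), f e = false))).card
        ≤ 2 * 2 ^ (m - t.choose 2) := by
      intro s hs
      rw [Finset.mem_powersetCard] at hs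
      have hPcard : (s.offDiag.image (Function.uncurry Sym2.mk)).card = t.choose 2 := by
        rw [Sym2.card_image_offDiag, hs.2]
      refine (Finset.card_union_le _ _).trans ?_
      rw [count_const, count_const, hPcard, ← hm]
      omega
    calc ∑ s ∈ Finset.univ.powersetCard t, _ ≤
        ∑ _s ∈ Finset.univ.powersetCard t, (2 * 2 ^ (m - t.choose 2)) :=
          Finset.sum_le_sum hbound
      _ = n.choose t * (2 * 2 ^ (m - t.choose 2)) := by
          rw [Finset.sum_const, smul_eq_mul, Finset.card_powersetCard, Finset.card_univ,
            Fintype.card_fin]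
  have htotal : (Finset.univ : Finset (Sym2 (Fin n) → Bool)).card = 2 ^ m := by
    rw [Finset.card_univ, Fintype.card_fun, Fintype.card_bool]
  have : 2 ^ m ≤ n.choose t * (2 * 2 ^ (m - t.choose 2)) :=
    htotal ▸ (Finset.card_le_card hsub).trans hcardB
  have hfin : n.choose t * (2 * 2 ^ (m - t.choose 2)) < 2 ^ m := by
    calc n.choose t * (2 * 2 ^ (m - t.choose 2))
        = (2 * n.choose t) * 2 ^ (m - t.choose 2) := by ring
      _ < 2 ^ (t.choose 2) * 2 ^ (m - t.choose 2) :=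
          mul_lt_mul_of_pos_right h (Nat.pow_pos (by norm_num))
      _ = 2 ^ m := by rw [← pow_add]; congr 1; omega
  exact absurd this (not_le.mpr hfin)

/-- For every `n ≥ 2` there is a graph on `n` vertices with no clique and no
independent set of size greater than `2·log₂ n`. -/
theorem exists_ramsey_graph :
    ∀ n : ℕ, 2 ≤ n → ∃ G : SimpleGraph (Fin n),
      ∀ s : Finset (Fin n),
        ((s : Set (Fin n)).Pairwise G.Adj ∨
         (s : Set (Fin n)).Pairwise (fun a b => ¬ G.Adj a b)) →
        (s.card : ℝ) ≤ 2 * Real.logb 2 (n : ℝ) := by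
  intro n hn
  set L : ℝ := 2 * Real.logb 2 (n : ℝ) with hL
  have hlogb : (1 : ℝ) ≤ Real.logb 2 (n : ℝ) := by
    rw [show (1:ℝ) = Real.logb 2 2 by simp]
    exact Real.logb_le_logb_of_le (by norm_num) (by norm_num) (by exact_mod_cast hn)
  have hL2 : (2 : ℝ) ≤ L := by rw [hL]; linarith
  set t : ℕ := ⌊L⌋₊ + 1 with htdef
  have ht3 : 3 ≤ t := by
    have : 2 ≤ ⌊L⌋₊ := Nat.le_floor (by exact_mod_cast hL2)
    omega
  have htL : L < (t : ℕ) := by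
    have := Nat.lt_floor_add_one L
    rw [htdef]; push_cast; linarith
  -- n^2 < 2^t
  have hn2 : n ^ 2 < 2 ^ t := by
    have hnpos : (0 : ℝ) < (n : ℝ) := by positivity
    have h1 : ((n : ℝ)) ^ 2 = (2 : ℝ) ^ (L) := by
      rw [hL, mul_comm, Real.rpow_mul (by norm_num), Real.rpow_logb (by norm_num) (by norm_num) hnpos]
      rw [← Real.rpow_natCast (n : ℝ) 2]
      norm_num
    have h2 : (2 : ℝ) ^ (L) < (2 : ℝ) ^ ((t : ℝ)) :=
      Real.rpow_lt_rpow_left_iff (by norm_num) |>.mpr htL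
    have h3 : ((n : ℝ)) ^ 2 < ((2 : ℕ) : ℝ) ^ (t : ℕ) := by
      rw [h1]
      calc (2:ℝ) ^ L < (2:ℝ) ^ ((t:ℝ)) := h2
        _ = ((2:ℕ):ℝ) ^ (t:ℕ) := by rw [Real.rpow_natCast]; norm_num
    exact_mod_cast h3
  rcases Nat.lt_or_ge n t with hnt | hnt
  · -- t > n : every set has card ≤ n < t ≤ ... trivial with any graph
    refine ⟨⊥, fun s _ => ?_⟩
    have hcard : s.card ≤ n := by
      simpa using Finset.card_le_card (Finset.subset_univ s)
    have : s.card ≤ ⌊L⌋₊ := by omega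
    calc (s.card : ℝ) ≤ (⌊L⌋₊ : ℝ) := by exact_mod_cast this
      _ ≤ L := Nat.floor_le (by linarith)
  · obtain ⟨f, hf⟩ := exists_good n t (key_count n t ht3 hn2) hnt
    refine ⟨SimpleGraph.fromRel (fun a b => f s(a, b) = true), fun s hs => ?_⟩
    -- show s.card ≤ ⌊L⌋₊
    have hcard : s.card ≤ ⌊L⌋₊ := by
      by_contra hbig
      push_neg at hbig
      have : t ≤ s.card := by omega
      obtain ⟨u, hus, hucard⟩ := Finset.exists_subset_card_eq this
      refine hf u hucard ?_
      have husset : (u : Set (Fin n)) ⊆ (s : Set (Fin n)) := Finset.coe_subset.2 hus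
      rcases hs with hadj | hnadj
      · left
        intro e he
        rw [Finset.mem_image] at he
        obtain ⟨⟨a, b⟩, hab, rfl⟩ := he
        rw [Finset.mem_offDiag] at hab
        have := (hadj.mono husset) hab.1 hab.2.1 hab.2.2
        rw [SimpleGraph.fromRel_adj] at this
        rcases this.2 with h | h
        · exact h
        · change f s(a, b) = true; rw [Sym2.eq_swap]; exact h
      · right
        intro e he
        rw [Finset.mem_image] at he
        obtain ⟨⟨a, b⟩, hab, rfl⟩ := he
        rw [Finset.mem_offDiag] at hab
        have hne : ¬ (SimpleGraph.fromRel (fun a b => f s(a, b) = true)).Adj a b :=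
          (hnadj.mono husset) hab.1 hab.2.1 hab.2.2
        rw [SimpleGraph.fromRel_adj] at hne
        push_neg at hne
        have h5 := hne hab.2.2
        simpa using h5.1
    calc (s.card : ℝ) ≤ (⌊L⌋₊ : ℝ) := by exact_mod_cast hcard
      _ ≤ L := Nat.floor_le (by linarith)
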